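/- Let N ∈ ℕ, let a_0, …, a_N be complex numbers, z ∈ ℂ, and let μ_0, …, μ_N, β ∈ ℂ satisfy |μ_n| ≤ α for all n and |β| ≤ ζ, where α, ζ ≥ 0. If w̃ = Σ_{n=0}^{N} a_n·(1 + μ_n)·(z·(1 + β))^n and w(z) = Σ_{n=0}^{N} a_n z^n, then |w̃ − w(z)| ≤ Σ_{n=0}^{N} |a_n|·|z|^n·((1 + α)·(1 + ζ)^n − 1). -/

import Mathlib

open Finset Complex

lemma pow_sub_one_abs (x : ℂ) (ζ : ℝ) (hx : ‖x‖ ≤ ζ) (n : ℕ) :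
    ‖(1 + x) ^ n - 1‖ ≤ (1 + ζ) ^ n - 1 := by
  have hζ : 0 ≤ ζ := le_trans (norm_nonneg x) hx
  induction n with
  | zero => simp
  | succ n ih =>
    have key : (1 + x) ^ (n + 1) - 1 = (1 + x) * ((1 + x) ^ n - 1) + x := by ring
    rw [key]
    calc ‖(1 + x) * ((1 + x) ^ n - 1) + x‖
        ≤ ‖1 + x‖ * ‖(1 + x) ^ n - 1‖ + ‖x‖ := by
          refine le_trans (norm_add_le _ _) ?_
          rw [norm_mul]
      _ ≤ (1 + ζ) * ((1 + ζ) ^ n - 1) + ζ := by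
          have h1 : ‖1 + x‖ ≤ 1 + ζ := by
            calc ‖1 + x‖ ≤ ‖1‖ + ‖x‖ := norm_add_le _ _
              _ ≤ 1 + ζ := by simp [hx]
          have h2 : (1:ℝ) ≤ (1 + ζ) ^ n := one_le_pow₀ (by linarith)
          have h3 : (0:ℝ) ≤ ‖(1 + x) ^ n - 1‖ := norm_nonneg _
          nlinarith [norm_nonneg (1 + x)]
      _ = (1 + ζ) ^ (n + 1) - 1 := by ring

/-- Forward-error bound from componentwise backward stability: if
`w̃ = ∑ a n (1 + μ n) (z (1 + β))^n` with `|μ n| ≤ α` and `|β| ≤ ζ`, then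
`|w̃ - w(z)| ≤ ∑ |a n| |z|^n ((1 + α)(1 + ζ)^n - 1)`. -/
theorem backward_stable_forward_error (N : ℕ) (a : ℕ → ℂ) (z : ℂ)
    (μ : ℕ → ℂ) (β : ℂ) (α ζ : ℝ) (hα : 0 ≤ α) (hζ : 0 ≤ ζ)
    (hμ : ∀ n ≤ N, ‖μ n‖ ≤ α) (hβ : ‖β‖ ≤ ζ)
    (wt w : ℂ)
    (hwt : wt = ∑ n ∈ range (N + 1), a n * (1 + μ n) * (z * (1 + β)) ^ n)
    (hw : w = ∑ n ∈ range (N + 1), a n * z ^ n) :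
    ‖wt - w‖
      ≤ ∑ n ∈ range (N + 1),
          ‖a n‖ * ‖z‖ ^ n * ((1 + α) * (1 + ζ) ^ n - 1) := by
  subst hwt hw
  rw [← Finset.sum_sub_distrib]
  refine le_trans (norm_sum_le _ _) (Finset.sum_le_sum ?_)
  intro n hn
  have hμn := hμ n (Nat.lt_succ_iff.mp (Finset.mem_range.mp hn))
  have key : a n * (1 + μ n) * (z * (1 + β)) ^ n - a n * z ^ n
      = a n * z ^ n * (μ n * (1 + β) ^ n + ((1 + β) ^ n - 1)) := by rw [mul_pow]; ring
  rw [key, norm_mul, norm_mul, norm_pow]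
  rw [show ‖a n‖ * ‖z‖ ^ n * ((1 + α) * (1 + ζ) ^ n - 1) = ‖a n‖ * ‖z‖ ^ n * ((1 + α) * (1 + ζ) ^ n - 1) from rfl]
  refine mul_le_mul_of_nonneg_left ?_ (by positivity)
  calc ‖μ n * (1 + β) ^ n + ((1 + β) ^ n - 1)‖
      ≤ ‖μ n‖ * ‖1 + β‖ ^ n + ‖(1 + β) ^ n - 1‖ := by
        refine le_trans (norm_add_le _ _) ?_
        rw [norm_mul, norm_pow]
    _ ≤ α * (1 + ζ) ^ n + ((1 + ζ) ^ n - 1) := by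
        have hb1 : ‖1 + β‖ ≤ 1 + ζ := by
          calc ‖1 + β‖ ≤ ‖1‖ + ‖β‖ := norm_add_le _ _
            _ ≤ 1 + ζ := by simp [hβ]
        have hb2 := pow_sub_one_abs β ζ hβ n
        have hb3 : ‖1 + β‖ ^ n ≤ (1 + ζ) ^ n :=
          pow_le_pow_left₀ (norm_nonneg _) hb1 n
        nlinarith [norm_nonneg (μ n), pow_nonneg (norm_nonneg (1 + β)) n]
    _ = (1 + α) * (1 + ζ) ^ n - 1 := by ring
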